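/- Let A be a nonsingular d×d real matrix and let k ∈ {1,…,d} be an index with ‖A − A(k) A(k)⁺ A‖_F ≤ √d · σ_d(A), where A(k) is A with its k-th column removed and A(k)⁺ its Moore–Penrose pseudo-inverse. Then for every d×d orthogonal matrix U, at least one of the following two inequalities holds: ‖A_{*,k} − U A_{*,k}‖_2 ≤ (1 + √2) √d · ‖U A(k) − A(k)‖_F, or ‖2 A(k) A(k)⁺ A_{*,k} − A_{*,k} − U A_{*,k}‖_2 ≤ (1 + √2) √d · ‖U A(k) − A(k)‖_F. -/

import Mathlib

open scoped BigOperators Matrix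

/-- Frobenius norm of a real matrix. -/
noncomputable def frob {m n : Type*} [Fintype m] [Fintype n] (M : Matrix m n ℝ) : ℝ :=
  Real.sqrt (∑ i, ∑ j, (M i j) ^ 2)

/-- Euclidean norm on `ℝ^d`. -/
noncomputable def vnorm {d : ℕ} (v : Fin d → ℝ) : ℝ :=
  Real.sqrt (∑ a, (v a) ^ 2)

/-- `A` with its `k`-th column removed; the remaining columns are indexed by `{j // j ≠ k}`. -/
def colDel {d : ℕ} (A : Matrix (Fin d) (Fin d) ℝ) (k : Fin d) :
    Matrix (Fin d) {j : Fin d // j ≠ k} ℝ :=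
  Matrix.of fun i j => A i j.1

/-- `P` is the Moore–Penrose pseudo-inverse of `M` (the four Penrose conditions). -/
def IsMPInv {m n : Type*} [Fintype m] [Fintype n]
    (M : Matrix m n ℝ) (P : Matrix n m ℝ) : Prop :=
  M * P * M = M ∧ P * M * P = P ∧ (M * P)ᵀ = M * P ∧ (P * M)ᵀ = P * M

/-- The smallest singular value of a square matrix, as the infimum of `‖A v‖` over
unit vectors `v`. -/
noncomputable def sigmaMin {d : ℕ} (A : Matrix (Fin d) (Fin d) ℝ) : ℝ :=
  sInf {r : ℝ | ∃ v : Fin d → ℝ, vnorm v = 1 ∧ r = vnorm (A.mulVec v)}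

section Helpers

variable {d : ℕ}

private lemma vnorm_nonneg' (v : Fin d → ℝ) : 0 ≤ vnorm v := Real.sqrt_nonneg _

private lemma sum_sq_nonneg' (v : Fin d → ℝ) : 0 ≤ ∑ a, (v a)^2 :=
  Finset.sum_nonneg fun _ _ => sq_nonneg _

private lemma vnorm_sq' (v : Fin d → ℝ) : vnorm v ^ 2 = ∑ a, (v a)^2 :=
  Real.sq_sqrt (sum_sq_nonneg' v)

private lemma vnorm_eq_sqrt_dot (v : Fin d → ℝ) : vnorm v = Real.sqrt (v ⬝ᵥ v) := by
  unfold vnorm dotProduct; congr 1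
  exact Finset.sum_congr rfl fun a _ => by ring

private lemma dot_self_eq' (v : Fin d → ℝ) : v ⬝ᵥ v = vnorm v ^ 2 := by
  rw [vnorm_sq']; unfold dotProduct
  exact Finset.sum_congr rfl fun a _ => by ring

private lemma vnorm_eq_zero' {v : Fin d → ℝ} (h : vnorm v = 0) : v = 0 := by
  have := Real.sqrt_eq_zero (sum_sq_nonneg' v) |>.mp h
  funext i
  have hi := (Finset.sum_eq_zero_iff_of_nonneg (fun a _ => sq_nonneg (v a))).mp this i
    (Finset.mem_univ i)
  exact pow_eq_zero_iff (by norm_num) |>.mp hi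

private lemma eq_zero_of_dot_self' {v : Fin d → ℝ} (h : v ⬝ᵥ v = 0) : v = 0 := by
  apply vnorm_eq_zero'
  have := dot_self_eq' v
  nlinarith [vnorm_nonneg' v]

private lemma le_of_sq_le_sq'' {x y : ℝ} (h : x^2 ≤ y^2) (hy : 0 ≤ y) : x ≤ y := by
  nlinarith [sq_nonneg (x - y), sq_nonneg (x + y)]

private lemma cauchy_dot' (u v : Fin d → ℝ) : u ⬝ᵥ v ≤ vnorm u * vnorm v := by
  have h := Finset.sum_mul_sq_le_sq_mul_sq Finset.univ u v
  have h2 : (u ⬝ᵥ v)^2 ≤ (vnorm u * vnorm v)^2 := by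
    rw [mul_pow, vnorm_sq', vnorm_sq']; exact h
  exact le_of_sq_le_sq'' h2 (mul_nonneg (vnorm_nonneg' u) (vnorm_nonneg' v))

private lemma vnorm_add_le' (u v : Fin d → ℝ) : vnorm (u + v) ≤ vnorm u + vnorm v := by
  apply le_of_sq_le_sq'' _ (add_nonneg (vnorm_nonneg' u) (vnorm_nonneg' v))
  have hexp : vnorm (u + v)^2 = vnorm u ^2 + 2*(u ⬝ᵥ v) + vnorm v^2 := by
    rw [vnorm_sq', vnorm_sq', vnorm_sq']
    unfold dotProduct
    rw [Finset.mul_sum, ← Finset.sum_add_distrib, ← Finset.sum_add_distrib]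
    exact Finset.sum_congr rfl fun a _ => by simp only [Pi.add_apply]; ring
  nlinarith [cauchy_dot' u v]

private lemma vnorm_smul' (c : ℝ) (v : Fin d → ℝ) : vnorm (c • v) = |c| * vnorm v := by
  unfold vnorm
  rw [← Real.sqrt_sq_eq_abs, ← Real.sqrt_mul (sq_nonneg c), Finset.mul_sum]
  congr 1
  exact Finset.sum_congr rfl fun a _ => by simp only [Pi.smul_apply, smul_eq_mul]; ring

private lemma vnorm_neg' (v : Fin d → ℝ) : vnorm (-v) = vnorm v := by
  unfold vnorm; congr 1; exact Finset.sum_congr rfl fun a _ => by simp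

private lemma vnorm_sub_le' (u v : Fin d → ℝ) : vnorm (u - v) ≤ vnorm u + vnorm v := by
  have := vnorm_add_le' u (-v)
  rw [vnorm_neg'] at this
  simpa [sub_eq_add_neg] using this

variable {n : Type*} [Fintype n]

private lemma frob_nonneg' (M : Matrix (Fin d) n ℝ) : 0 ≤ frob M := Real.sqrt_nonneg _

private lemma mulVec_frob_le' (M : Matrix (Fin d) n ℝ) (z : n → ℝ) :
    vnorm (M.mulVec z) ≤ frob M * Real.sqrt (∑ j, (z j)^2) := by
  unfold vnorm frob
  rw [← Real.sqrt_mul (show (0:ℝ) ≤ ∑ i, ∑ j, (M i j)^2 from Finset.sum_nonneg fun _ _ => Finset.sum_nonneg fun _ _ => sq_nonneg _)]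
  apply Real.sqrt_le_sqrt
  rw [Finset.sum_mul]
  apply Finset.sum_le_sum
  intro i _
  have := Finset.sum_mul_sq_le_sq_mul_sq Finset.univ (fun j => M i j) z
  simpa [Matrix.mulVec, dotProduct] using this

private lemma frob_sub_comm' (M N : Matrix (Fin d) n ℝ) : frob (M - N) = frob (N - M) := by
  unfold frob
  congr 1
  refine Finset.sum_congr rfl fun i _ => Finset.sum_congr rfl fun j _ => ?_
  simp only [Matrix.sub_apply]; ring

private lemma sum_split' (k : Fin d) (f : Fin d → ℝ) :
    ∑ j, f j = f k + ∑ j : {j : Fin d // j ≠ k}, f j.1 := by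
  rw [Fintype.sum_eq_add_sum_compl k f]
  congr 1
  rw [Finset.sum_subtype (p := fun j => j ≠ k)]
  intro x; simp

private lemma dot_mulVec'' {m : Type*} [Fintype m] (u : m → ℝ) (M : Matrix m n ℝ) (v : n → ℝ) :
    u ⬝ᵥ M.mulVec v = Mᵀ.mulVec u ⬝ᵥ v := by
  rw [Matrix.dotProduct_mulVec, Matrix.mulVec_transpose]

private lemma mulVec_dot' {m : Type*} [Fintype m] (M : Matrix m n ℝ) (u : n → ℝ) (w : m → ℝ) :
    (M.mulVec u) ⬝ᵥ w = u ⬝ᵥ (Mᵀ.mulVec w) := by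
  rw [dotProduct_comm, dot_mulVec'', dotProduct_comm]

private lemma sigmaSet_bddBelow' (A : Matrix (Fin d) (Fin d) ℝ) :
    BddBelow {r : ℝ | ∃ v : Fin d → ℝ, vnorm v = 1 ∧ r = vnorm (A.mulVec v)} :=
  ⟨0, fun _ ⟨_, _, hr⟩ => hr ▸ vnorm_nonneg' _⟩

private lemma sigma_le_unit' (A : Matrix (Fin d) (Fin d) ℝ) {v : Fin d → ℝ} (hv : vnorm v = 1) :
    sigmaMin A ≤ vnorm (A.mulVec v) :=
  csInf_le (sigmaSet_bddBelow' A) ⟨v, hv, rfl⟩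

private lemma sigma_mul_le' (A : Matrix (Fin d) (Fin d) ℝ) (v : Fin d → ℝ) :
    sigmaMin A * vnorm v ≤ vnorm (A.mulVec v) := by
  rcases eq_or_ne v 0 with rfl | hv
  · simp [vnorm]
  · have hvn : vnorm v ≠ 0 := fun h => hv (vnorm_eq_zero' h)
    have hvpos : 0 < vnorm v := lt_of_le_of_ne (vnorm_nonneg' v) (Ne.symm hvn)
    have hunit : vnorm ((vnorm v)⁻¹ • v) = 1 := by
      rw [vnorm_smul', abs_of_pos (inv_pos.mpr hvpos), inv_mul_cancel₀ hvn]
    have h := sigma_le_unit' A hunit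
    rw [Matrix.mulVec_smul, vnorm_smul', abs_of_pos (inv_pos.mpr hvpos)] at h
    calc sigmaMin A * vnorm v ≤ ((vnorm v)⁻¹ * vnorm (A.mulVec v)) * vnorm v :=
          mul_le_mul_of_nonneg_right h (le_of_lt hvpos)
      _ = vnorm (A.mulVec v) := by field_simp

private lemma vnorm_continuous' : Continuous (vnorm (d := d)) := by
  apply Continuous.sqrt
  exact continuous_finset_sum _ fun i _ => (continuous_apply i).pow 2

private lemma sigma_pos' (A : Matrix (Fin d) (Fin d) ℝ) (hA : A.det ≠ 0) (k : Fin d) :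
    0 < sigmaMin A := by
  have hmv : Continuous fun v : Fin d → ℝ => A.mulVec v := by
    apply continuous_pi
    intro i
    show Continuous fun v : Fin d → ℝ => ∑ j, A i j * v j
    exact continuous_finset_sum _ fun j _ => (continuous_const.mul (continuous_apply j))
  set S : Set (Fin d → ℝ) := {v | vnorm v = 1} with hS
  have hclosed : IsClosed S := isClosed_eq vnorm_continuous' continuous_const
  have hsub : S ⊆ Metric.closedBall 0 1 := by
    intro v hv
    rw [Metric.mem_closedBall, dist_zero_right]
    rw [pi_norm_le_iff_of_nonneg (by norm_num)]
    intro i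
    rw [Real.norm_eq_abs, ← Real.sqrt_sq_eq_abs]
    calc Real.sqrt ((v i)^2) ≤ Real.sqrt (∑ a, (v a)^2) := by
          apply Real.sqrt_le_sqrt
          exact Finset.single_le_sum (fun a _ => sq_nonneg (v a)) (Finset.mem_univ i)
      _ = 1 := hv
  have hScompact : IsCompact S :=
    (isCompact_closedBall (0 : Fin d → ℝ) 1).of_isClosed_subset hclosed hsub
  have hSne : S.Nonempty := by
    refine ⟨fun j => if j = k then 1 else 0, ?_⟩
    show vnorm _ = 1
    unfold vnorm
    have hsum : ∑ a, ((fun j => if j = k then (1:ℝ) else 0) a)^2 = 1 := by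
      simp [apply_ite (fun x : ℝ => x^2)]
    rw [hsum]
    exact Real.sqrt_one
  have himg : {r : ℝ | ∃ v : Fin d → ℝ, vnorm v = 1 ∧ r = vnorm (A.mulVec v)}
      = (fun v => vnorm (A.mulVec v)) '' S := by
    ext r; constructor
    · rintro ⟨v, hv, rfl⟩; exact ⟨v, hv, rfl⟩
    · rintro ⟨v, hv, rfl⟩; exact ⟨v, hv, rfl⟩
  have hmem : sigmaMin A ∈ (fun v => vnorm (A.mulVec v)) '' S := by
    rw [sigmaMin, himg]
    exact (hScompact.image (vnorm_continuous'.comp hmv)).sInf_mem (hSne.image _)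
  obtain ⟨v, hv, hσ⟩ := hmem
  have hv0 : v ≠ 0 := by
    intro h; rw [h] at hv
    simp only [hS, Set.mem_setOf_eq] at hv
    rw [show vnorm (0 : Fin d → ℝ) = 0 by simp [vnorm]] at hv
    norm_num at hv
  have hAv : A.mulVec v ≠ 0 := by
    intro h
    apply hv0
    have hinv := Matrix.nonsing_inv_mul A (isUnit_iff_ne_zero.mpr hA)
    have h2 : (A⁻¹ * A).mulVec v = A⁻¹.mulVec (A.mulVec v) := (Matrix.mulVec_mulVec _ _ _).symm
    rw [hinv, Matrix.one_mulVec, h, Matrix.mulVec_zero] at h2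
    exact h2
  rw [← hσ]
  have hne : vnorm (A.mulVec v) ≠ 0 := fun h => hAv (vnorm_eq_zero' h)
  exact lt_of_le_of_ne (vnorm_nonneg' _) (Ne.symm hne)

end Helpers

set_option maxHeartbeats 4000000 in
theorem stmt6 {d : ℕ} (A : Matrix (Fin d) (Fin d) ℝ) (hA : A.det ≠ 0)
    (k : Fin d) (P : Matrix {j : Fin d // j ≠ k} (Fin d) ℝ) (hP : IsMPInv (colDel A k) P)
    (hk : frob (A - colDel A k * P * A) ≤ Real.sqrt d * sigmaMin A)
    (U : Matrix (Fin d) (Fin d) ℝ) (hU : Uᵀ * U = 1) :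
    vnorm ((fun i => A i k) - U.mulVec (fun i => A i k)) ≤
        (1 + Real.sqrt 2) * Real.sqrt d * frob (U * colDel A k - colDel A k) ∨
    vnorm ((2 : ℝ) • (colDel A k * P).mulVec (fun i => A i k)
          - (fun i => A i k) - U.mulVec (fun i => A i k)) ≤
        (1 + Real.sqrt 2) * Real.sqrt d * frob (U * colDel A k - colDel A k) := by
  classical
  obtain ⟨h1, h2, h3, h4⟩ := hP
  set B := colDel A k with hB
  set a : Fin d → ℝ := fun i => A i k with ha'
  set Q : Matrix (Fin d) (Fin d) ℝ := B * P with hQ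
  have hQB : Q * B = B := h1
  have hQQ : Q * Q = Q := by rw [hQ, ← Matrix.mul_assoc]; rw [show B * P * B = B from h1]
  have hQsym : Qᵀ = Q := h3
  set σ := sigmaMin A with hσ'
  have hσpos : 0 < σ := sigma_pos' A hA k
  -- U preserves dot products
  have hUdot : ∀ u v : Fin d → ℝ, (U.mulVec u) ⬝ᵥ (U.mulVec v) = u ⬝ᵥ v := by
    intro u v
    rw [mulVec_dot', Matrix.mulVec_mulVec, hU, Matrix.one_mulVec]
  -- the residual r
  set w : {j : Fin d // j ≠ k} → ℝ := P.mulVec a with hw'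
  have hQa : Q.mulVec a = B.mulVec w := (Matrix.mulVec_mulVec a B P).symm
  set r : Fin d → ℝ := a - Q.mulVec a with hr'
  have har : a = B.mulVec w + r := by rw [hr', hQa]; abel
  -- r is orthogonal to the columns of B
  have hperp : ∀ z : {j : Fin d // j ≠ k} → ℝ, r ⬝ᵥ B.mulVec z = 0 := by
    intro z
    rw [hr', sub_dotProduct]
    have : (Q.mulVec a) ⬝ᵥ (B.mulVec z) = a ⬝ᵥ (B.mulVec z) := by
      rw [mulVec_dot', hQsym, Matrix.mulVec_mulVec, hQB]
    rw [this, sub_self]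
  set ε := vnorm r with hε'
  have hεnn : 0 ≤ ε := vnorm_nonneg' r
  -- frob (A - Q*A) = ε
  have hfrob : frob (A - Q * A) = ε := by
    unfold frob
    rw [Finset.sum_comm]
    rw [sum_split' k (fun j => ∑ i, ((A - Q * A) i j)^2)]
    have hck : ∀ i, (A - Q * A) i k = r i := fun i => rfl
    have hcj : ∀ (j : {j : Fin d // j ≠ k}) (i : Fin d), (A - Q * A) i j.1 = 0 := by
      intro j i
      simp only [Matrix.sub_apply]
      have hQAj : (Q * A) i j.1 = (Q * B) i j := by
        simp only [Matrix.mul_apply]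
        exact Finset.sum_congr rfl fun l _ => rfl
      rw [hQAj, hQB]
      show A i j.1 - B i j = 0
      simp [hB, colDel]
    rw [show ∑ j : {j : Fin d // j ≠ k}, ∑ i, ((A - Q * A) i j.1)^2 = 0 from
      Finset.sum_eq_zero fun j _ => Finset.sum_eq_zero fun i _ => by rw [hcj j i]; ring]
    rw [show ∑ i, ((A - Q * A) i k)^2 = ∑ i, (r i)^2 from
      Finset.sum_congr rfl fun i _ => by rw [hck i]]
    rw [add_zero]
    rfl
  have hε : ε ≤ Real.sqrt d * σ := by rw [← hfrob]; exact hk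
  -- extension of a vector on the subtype
  have hext_mulVec : ∀ (z : {j : Fin d // j ≠ k} → ℝ) (t : ℝ),
      A.mulVec (fun j => if h : j = k then t else z ⟨j, h⟩) = B.mulVec z + t • a := by
    intro z t
    funext i
    show ∑ j, A i j * _ = _
    rw [sum_split' k (fun j => A i j * if h : j = k then t else z ⟨j, h⟩)]
    rw [dif_pos rfl]
    have : ∑ j : {j : Fin d // j ≠ k}, A i j.1 * (if h : j.1 = k then t else z ⟨j.1, h⟩)
        = ∑ j : {j : Fin d // j ≠ k}, B i j * z j := by
      refine Finset.sum_congr rfl fun j _ => ?_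
      rw [dif_neg j.2]
      rfl
    rw [this]
    show A i k * t + ∑ j : {j : Fin d // j ≠ k}, B i j * z j
        = (∑ j : {j : Fin d // j ≠ k}, B i j * z j) + t * a i
    rw [ha']
    ring
  have hext_sq : ∀ (z : {j : Fin d // j ≠ k} → ℝ) (t : ℝ),
      ∑ j, (if h : j = k then t else z ⟨j, h⟩)^2 = t^2 + ∑ j : {j : Fin d // j ≠ k}, (z j)^2 := by
    intro z t
    rw [sum_split' k (fun j => (if h : j = k then t else z ⟨j, h⟩)^2), dif_pos rfl]
    congr 1
    refine Finset.sum_congr rfl fun j _ => ?_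
    rw [dif_neg j.2]
  -- bound on w
  have hw2 : ∑ j : {j : Fin d // j ≠ k}, (w j)^2 ≤ (d : ℝ) - 1 := by
    have hmv := hext_mulVec w (-1)
    have hmv2 : A.mulVec (fun j => if h : j = k then (-1 : ℝ) else w ⟨j, h⟩) = -r := by
      rw [hmv, har]
      funext i
      simp only [Pi.add_apply, Pi.smul_apply, Pi.neg_apply, smul_eq_mul]
      ring
    have hσle := sigma_mul_le' A (fun j => if h : j = k then (-1 : ℝ) else w ⟨j, h⟩)
    rw [hmv2, vnorm_neg', ← hε', ← hσ'] at hσle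
    have hvle : σ * vnorm (fun j => if h : j = k then (-1 : ℝ) else w ⟨j, h⟩)
        ≤ Real.sqrt d * σ := le_trans hσle hε
    have hvle2 : vnorm (fun j => if h : j = k then (-1 : ℝ) else w ⟨j, h⟩) ≤ Real.sqrt d := by
      apply le_of_mul_le_mul_left _ hσpos
      calc σ * vnorm (fun j => if h : j = k then (-1 : ℝ) else w ⟨j, h⟩)
          ≤ Real.sqrt d * σ := hvle
        _ = σ * Real.sqrt d := mul_comm _ _
    have hsq : vnorm (fun j => if h : j = k then (-1 : ℝ) else w ⟨j, h⟩)^2 ≤ (d : ℝ) := by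
      calc _ ≤ (Real.sqrt d)^2 := pow_le_pow_left₀ (vnorm_nonneg' _) hvle2 2
        _ = (d : ℝ) := Real.sq_sqrt (Nat.cast_nonneg d)
    rw [vnorm_sq', hext_sq w (-1)] at hsq
    nlinarith
  clear_value B a Q σ w r ε
  -- the frobenius bound E
  set E := frob (U * B - B) with hE'
  have hEnn : 0 ≤ E := frob_nonneg' _
  have hEsym : frob (B - U * B) = E := frob_sub_comm' B (U * B)
  -- x = Q (U r)
  set Ur : Fin d → ℝ := U.mulVec r with hUr'
  clear_value Ur
  set z : {j : Fin d // j ≠ k} → ℝ := P.mulVec Ur with hz'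
  clear_value z
  set x : Fin d → ℝ := B.mulVec z with hx'
  clear_value x
  have hxQ : x = Q.mulVec Ur := by rw [hx', hz', Matrix.mulVec_mulVec, ← hQ]
  have hUrnorm : vnorm Ur = ε := by
    rw [hε', vnorm_eq_sqrt_dot, vnorm_eq_sqrt_dot, hUr', hUdot r r]
  -- ‖x‖² = Ur ⬝ x
  have hQx : Q.mulVec x = x := by
    rw [hxQ, Matrix.mulVec_mulVec, hQQ]
  have hxx : x ⬝ᵥ x = Ur ⬝ᵥ x := by
    nth_rewrite 1 [hxQ]
    rw [mulVec_dot', hQsym, hQx]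
  -- Ur ⬝ x = Ur ⬝ (B - U*B) z
  have hUrx : Ur ⬝ᵥ x = Ur ⬝ᵥ ((B - U * B).mulVec z) := by
    have hsplit : x = (B - U * B).mulVec z + (U * B).mulVec z := by
      rw [hx', Matrix.sub_mulVec]; abel
    have hz0 : Ur ⬝ᵥ ((U * B).mulVec z) = 0 := by
      have : (U * B).mulVec z = U.mulVec (B.mulVec z) := (Matrix.mulVec_mulVec z U B).symm
      rw [this, hUr', hUdot r (B.mulVec z), hperp z]
    nth_rewrite 1 [hsplit]
    rw [dotProduct_add, hz0, add_zero]
  set ζ := Real.sqrt (∑ j : {j : Fin d // j ≠ k}, (z j)^2) with hζ'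
  have hζnn : 0 ≤ ζ := Real.sqrt_nonneg _
  have hxle : vnorm x ^ 2 ≤ ε * (E * ζ) := by
    rw [← dot_self_eq', hxx, hUrx]
    calc Ur ⬝ᵥ ((B - U * B).mulVec z) ≤ vnorm Ur * vnorm ((B - U * B).mulVec z) :=
          cauchy_dot' _ _
      _ ≤ vnorm Ur * (frob (B - U * B) * ζ) := by
          exact mul_le_mul_of_nonneg_left (mulVec_frob_le' _ _)
            (by rw [hUrnorm]; exact hεnn)
      _ = ε * (E * ζ) := by rw [hUrnorm, hEsym]
  have hσζ : σ * ζ ≤ vnorm x := by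
    have h0 := hext_mulVec z 0
    have hA0 : A.mulVec (fun j => if h : j = k then (0:ℝ) else z ⟨j, h⟩) = x := by
      rw [h0, zero_smul, add_zero, hx']
    have hv0 : vnorm (fun j => if h : j = k then (0:ℝ) else z ⟨j, h⟩) = ζ := by
      rw [hζ']
      unfold vnorm
      congr 1
      rw [hext_sq z 0]
      ring
    have := sigma_mul_le' A (fun j => if h : j = k then (0:ℝ) else z ⟨j, h⟩)
    rw [hA0, hv0, ← hσ'] at this
    exact this
  -- ‖x‖ ≤ √d E
  have hxd : vnorm x ≤ Real.sqrt d * E := by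
    have hxnn := vnorm_nonneg' x
    have hsdnn : (0:ℝ) ≤ Real.sqrt d := Real.sqrt_nonneg _
    by_cases hx0 : vnorm x = 0
    · rw [hx0]; exact mul_nonneg hsdnn hEnn
    · have hxpos : 0 < vnorm x := lt_of_le_of_ne hxnn (Ne.symm hx0)
      have key : vnorm x * vnorm x ≤ (Real.sqrt d * E) * vnorm x := by
        have s2 : σ * (vnorm x * vnorm x) ≤ σ * (ε * (E * ζ)) := by
          have : vnorm x * vnorm x = vnorm x ^ 2 := by ring
          rw [this]
          exact mul_le_mul_of_nonneg_left hxle (le_of_lt hσpos)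
        have s3 : σ * (ε * (E * ζ)) ≤ ε * E * vnorm x := by
          calc σ * (ε * (E * ζ)) = (ε * E) * (σ * ζ) := by ring
            _ ≤ (ε * E) * vnorm x :=
              mul_le_mul_of_nonneg_left hσζ (mul_nonneg hεnn hEnn)
        have s4 : ε * E * vnorm x ≤ (Real.sqrt d * σ) * E * vnorm x := by
          apply mul_le_mul_of_nonneg_right _ hxnn
          exact mul_le_mul_of_nonneg_right hε hEnn
        have s5 : σ * (vnorm x * vnorm x) ≤ σ * ((Real.sqrt d * E) * vnorm x) := by
          calc σ * (vnorm x * vnorm x) ≤ (Real.sqrt d * σ) * E * vnorm x :=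
                le_trans s2 (le_trans s3 s4)
            _ = σ * ((Real.sqrt d * E) * vnorm x) := by ring
        exact le_of_mul_le_mul_left s5 hσpos
      exact le_of_mul_le_mul_right key hxpos
  -- decomposition Ur = x + γ • r
  have hyperp : ∀ t : {j : Fin d // j ≠ k} → ℝ, (Ur - x) ⬝ᵥ B.mulVec t = 0 := by
    intro t
    rw [sub_dotProduct]
    have hxB : x ⬝ᵥ B.mulVec t = Ur ⬝ᵥ B.mulVec t := by
      nth_rewrite 1 [hxQ]
      rw [mulVec_dot', hQsym, Matrix.mulVec_mulVec, hQB]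
    rw [hxB, sub_self]
  set v'' : Fin d → ℝ := A⁻¹.mulVec (Ur - x) with hv''
  clear_value v''
  have hAv'' : A.mulVec v'' = Ur - x := by
    rw [hv'', Matrix.mulVec_mulVec, Matrix.mul_nonsing_inv A (isUnit_iff_ne_zero.mpr hA),
      Matrix.one_mulVec]
  set γ : ℝ := v'' k with hγ'
  clear_value γ
  have hv''eq : v'' = fun j => if h : j = k then γ else v'' j := by
    funext j
    by_cases h : j = k
    · rw [dif_pos h, h, hγ']
    · rw [dif_neg h]
  have hy : Ur - x = B.mulVec (fun j => v'' j.1) + γ • a := by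
    rw [← hAv'']
    nth_rewrite 1 [hv''eq]
    exact hext_mulVec (fun j => v'' j.1) γ
  have hu0 : Ur - x - γ • r = B.mulVec ((fun j => v'' j.1) + γ • w) := by
    rw [hy, Matrix.mulVec_add, Matrix.mulVec_smul]
    nth_rewrite 1 [har]
    funext i
    simp only [Pi.add_apply, Pi.sub_apply, Pi.smul_apply, smul_eq_mul]
    ring
  have hu0z : Ur - x - γ • r = 0 := by
    apply eq_zero_of_dot_self'
    nth_rewrite 2 [hu0]
    have hd1 : (Ur - x) ⬝ᵥ B.mulVec ((fun j => v'' j.1) + γ • w) = 0 := hyperp _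
    have hd2 : r ⬝ᵥ B.mulVec ((fun j => v'' j.1) + γ • w) = 0 := hperp _
    rw [sub_dotProduct, hd1, smul_dotProduct, hd2]
    simp
  have hdec : Ur = x + γ • r := by
    have hz0 : Ur - (x + γ • r) = 0 := by rw [← hu0z]; abel
    exact sub_eq_zero.mp hz0
  -- scalar identities
  have hrx : r ⬝ᵥ x = 0 := by rw [hx']; exact hperp z
  have hxr : x ⬝ᵥ r = 0 := by rw [dotProduct_comm]; exact hrx
  have hrr : r ⬝ᵥ r = ε^2 := by rw [dot_self_eq', hε']
  have hrUr : r ⬝ᵥ Ur = γ * ε^2 := by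
    rw [hdec, dotProduct_add, hrx, dotProduct_smul, smul_eq_mul, hrr]
    ring
  have hUrUr : Ur ⬝ᵥ Ur = ε^2 := by
    rw [hUr', hUdot r r, hrr]
  have hnorms : ε^2 = vnorm x ^2 + γ^2 * ε^2 := by
    have : Ur ⬝ᵥ Ur = x ⬝ᵥ x + 2 * γ * (x ⬝ᵥ r) + γ^2 * (r ⬝ᵥ r) := by
      rw [hdec]
      rw [add_dotProduct, dotProduct_add, dotProduct_add,
        smul_dotProduct, dotProduct_smul, smul_dotProduct,
        dotProduct_smul]
      simp only [smul_eq_mul]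
      rw [dotProduct_comm r x, hrr]
      ring
    rw [hUrUr, hxr, hrr] at this
    rw [dot_self_eq' x] at this
    linarith [this]
  have hx2 : vnorm x ^ 2 ≤ (Real.sqrt d * E)^2 :=
    pow_le_pow_left₀ (vnorm_nonneg' x) hxd 2
  have hsd2 : (Real.sqrt 2)^2 = 2 := Real.sq_sqrt (by norm_num)
  have hγ2 : γ^2 * ε^2 ≤ ε^2 := by nlinarith [sq_nonneg (vnorm x)]
  -- the final vector identity pieces
  have hUa : U.mulVec a = (U * B).mulVec w + Ur := by
    nth_rewrite 1 [har]
    rw [Matrix.mulVec_add, Matrix.mulVec_mulVec, ← hUr']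
  have hwbound : vnorm ((B - U * B).mulVec w) ≤ Real.sqrt d * E := by
    calc vnorm ((B - U * B).mulVec w)
        ≤ frob (B - U * B) * Real.sqrt (∑ j : {j : Fin d // j ≠ k}, (w j)^2) :=
          mulVec_frob_le' _ _
      _ ≤ E * Real.sqrt d := by
          rw [hEsym]
          apply mul_le_mul_of_nonneg_left _ hEnn
          apply Real.sqrt_le_sqrt at hw2
          calc Real.sqrt (∑ j : {j : Fin d // j ≠ k}, (w j)^2) ≤ Real.sqrt ((d:ℝ) - 1) := hw2
            _ ≤ Real.sqrt d := Real.sqrt_le_sqrt (by linarith)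
      _ = Real.sqrt d * E := by ring
  rcases le_total 0 γ with hγ | hγ
  · -- left branch
    left
    have hkey : vnorm (r - Ur) ≤ Real.sqrt 2 * (Real.sqrt d * E) := by
      apply le_of_sq_le_sq''
      · have e1 : (r - Ur) ⬝ᵥ (r - Ur) = r ⬝ᵥ r - r ⬝ᵥ Ur - (Ur ⬝ᵥ r - Ur ⬝ᵥ Ur) := by
          rw [sub_dotProduct, dotProduct_sub, dotProduct_sub]
        have hdot : (r - Ur) ⬝ᵥ (r - Ur) = 2*ε^2 - 2*γ*ε^2 := by
          rw [e1, hrr, hrUr, dotProduct_comm Ur r, hrUr, hUrUr]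
          ring
        have hmono : γ^2 * ε^2 ≤ γ * ε^2 := by
          nlinarith [mul_nonneg (mul_nonneg hγ (sq_nonneg (γ - 1))) (sq_nonneg ε),
            mul_le_mul_of_nonneg_left hγ2 hγ]
        have : vnorm (r - Ur) ^ 2 = 2*ε^2 - 2*γ*ε^2 := by rw [← dot_self_eq', hdot]
        rw [this, mul_pow, hsd2]
        nlinarith
      · exact mul_nonneg (Real.sqrt_nonneg 2)
          (mul_nonneg (Real.sqrt_nonneg _) hEnn)
    have heq : a - U.mulVec a = (B - U * B).mulVec w + (r - Ur) := by
      rw [hUa, Matrix.sub_mulVec]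
      nth_rewrite 1 [har]
      abel
    calc vnorm (a - U.mulVec a) = vnorm ((B - U * B).mulVec w + (r - Ur)) := by rw [heq]
      _ ≤ vnorm ((B - U * B).mulVec w) + vnorm (r - Ur) := vnorm_add_le' _ _
      _ ≤ Real.sqrt d * E + Real.sqrt 2 * (Real.sqrt d * E) := add_le_add hwbound hkey
      _ = (1 + Real.sqrt 2) * Real.sqrt d * E := by ring
  · -- right branch
    right
    have hkey : vnorm (r + Ur) ≤ Real.sqrt 2 * (Real.sqrt d * E) := by
      apply le_of_sq_le_sq''
      · have e1 : (r + Ur) ⬝ᵥ (r + Ur) = r ⬝ᵥ r + r ⬝ᵥ Ur + (Ur ⬝ᵥ r + Ur ⬝ᵥ Ur) := by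
          rw [add_dotProduct, dotProduct_add, dotProduct_add]
        have hdot : (r + Ur) ⬝ᵥ (r + Ur) = 2*ε^2 + 2*γ*ε^2 := by
          rw [e1, hrr, hrUr, dotProduct_comm Ur r, hrUr, hUrUr]
          ring
        have hγn : (0:ℝ) ≤ -γ := neg_nonneg.mpr hγ
        have t1 : (0:ℝ) ≤ (-γ) * ((γ + 1)^2) * ε^2 :=
          mul_nonneg (mul_nonneg hγn (sq_nonneg _)) (sq_nonneg _)
        have t2 : (-γ) * (γ^2 * ε^2) ≤ (-γ) * ε^2 := mul_le_mul_of_nonneg_left hγ2 hγn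
        have hmono : γ^2 * ε^2 ≤ -(γ * ε^2) := by nlinarith [t1, t2]
        have : vnorm (r + Ur) ^ 2 = 2*ε^2 + 2*γ*ε^2 := by rw [← dot_self_eq', hdot]
        rw [this, mul_pow, hsd2]
        nlinarith
      · exact mul_nonneg (Real.sqrt_nonneg 2)
          (mul_nonneg (Real.sqrt_nonneg _) hEnn)
    have heq : (2:ℝ) • (Q.mulVec a) - a - U.mulVec a = (B - U * B).mulVec w - (r + Ur) := by
      rw [hUa, hQa, Matrix.sub_mulVec]
      nth_rewrite 1 [har]
      funext i
      simp only [Pi.add_apply, Pi.sub_apply, Pi.smul_apply, smul_eq_mul]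
      ring
    calc vnorm ((2:ℝ) • (Q.mulVec a) - a - U.mulVec a)
        = vnorm ((B - U * B).mulVec w - (r + Ur)) := by rw [heq]
      _ ≤ vnorm ((B - U * B).mulVec w) + vnorm (r + Ur) := vnorm_sub_le' _ _
      _ ≤ Real.sqrt d * E + Real.sqrt 2 * (Real.sqrt d * E) := add_le_add hwbound hkey
      _ = (1 + Real.sqrt 2) * Real.sqrt d * E := by ring
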